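/- For every integer i ≥ 1 and every commutative ℤ_(p)-algebra S, the substitution map r ↦ E(r) is a bijection from T^i·S[[T]] onto 1 + T^i·S[[T]]. -/

import Mathlib

open PowerSeries

noncomputable section

open scoped Classical in
/-- The series ℓ(T) = ∑_{i≥0} T^{p^i}/p^i over ℚ. -/
def lseries (p : ℕ) : PowerSeries ℚ :=
  PowerSeries.mk fun n => if ∃ i : ℕ, n = p ^ i then (n : ℚ)⁻¹ else 0

/-- Substitution `f(g)` of a power series `g` with zero constant coefficient
into a power series `f`. -/
def psComp {R : Type*} [CommSemiring R] (g f : PowerSeries R) : PowerSeries R :=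
  PowerSeries.mk fun n =>
    ∑ k ∈ Finset.range (n + 1), PowerSeries.coeff (R := R) k f * PowerSeries.coeff (R := R) n (g ^ k)

/-- The Artin–Hasse exponential E(T) = exp(∑ T^{p^i}/p^i) over ℚ. -/
def artinHasse (p : ℕ) : PowerSeries ℚ := psComp (lseries p) (PowerSeries.exp ℚ)

/-- The prime ideal (p) of ℤ. -/
abbrev pIdeal (p : ℕ) : Ideal ℤ := Ideal.span {(p : ℤ)}

instance pIdeal.isPrime (p : ℕ) [hp : Fact p.Prime] : (pIdeal p).IsPrime := by
  rw [Ideal.span_singleton_prime (by exact_mod_cast hp.out.ne_zero)]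
  exact Nat.prime_iff_prime_int.mp hp.out

/-- ℤ_(p), the localization of ℤ at the prime p. -/
abbrev ZLocP (p : ℕ) [Fact p.Prime] := Localization.AtPrime (pIdeal p)

/-- The canonical ring map ℤ_(p) → ℚ. -/
def ZLocPtoRat (p : ℕ) [Fact p.Prime] : ZLocP p →+* ℚ :=
  IsLocalization.lift (M := (pIdeal p).primeCompl)
    (g := Int.castRingHom ℚ)
    (fun y => isUnit_iff_ne_zero.mpr (by
      have h0 : (y : ℤ) ≠ 0 := fun h => y.2 (h ▸ (pIdeal p).zero_mem)
      simpa using h0))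

namespace AHaux

open PowerSeries Finset

variable {S : Type*} [CommRing S]

lemma coeff_psComp (g f : PowerSeries S) (n : ℕ) :
    PowerSeries.coeff (R := S) n (psComp g f)
      = ∑ k ∈ Finset.range (n + 1), PowerSeries.coeff (R := S) k f * PowerSeries.coeff (R := S) n (g ^ k) := by
  simp [psComp]

lemma pow_sub_pow (g h : PowerSeries S) (hg : X ∣ g) (hh : X ∣ h) (n : ℕ)
    (hd : X ^ n ∣ g - h) {k : ℕ} (hk : 2 ≤ k) :
    (X : PowerSeries S) ^ (n + 1) ∣ g ^ k - h ^ k := by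
  rw [← geom_sum₂_mul g h k, pow_succ']
  refine mul_dvd_mul ?_ hd
  refine Finset.dvd_sum fun j hj => ?_
  rcases Nat.eq_zero_or_pos j with rfl | hj0
  · exact Dvd.dvd.mul_left (hh.trans (dvd_pow_self h (by omega))) _
  · exact Dvd.dvd.mul_right (hg.trans (dvd_pow_self g (by omega))) _

lemma comp_sub_comp (F : PowerSeries S) (hF1 : PowerSeries.coeff (R := S) 1 F = 1)
    (g h : PowerSeries S) (hg : X ∣ g) (hh : X ∣ h) (n : ℕ) (hd : X ^ n ∣ g - h) :
    (X : PowerSeries S) ^ (n + 1) ∣ (psComp g F - psComp h F) - (g - h) := by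
  rw [X_pow_dvd_iff]
  intro m hm
  simp only [map_sub, coeff_psComp, ← Finset.sum_sub_distrib]
  have hterm : ∀ k ∈ Finset.range (m + 1),
      PowerSeries.coeff (R := S) k F * PowerSeries.coeff (R := S) m (g ^ k)
        - PowerSeries.coeff (R := S) k F * PowerSeries.coeff (R := S) m (h ^ k)
      = if k = 1 then PowerSeries.coeff (R := S) m g - PowerSeries.coeff (R := S) m h else 0 := by
    intro k _
    rcases eq_or_ne k 1 with rfl | hk1
    · simp [hF1, pow_one, mul_sub]
    · rw [if_neg hk1, ← mul_sub, ← map_sub]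
      rcases Nat.lt_or_ge k 2 with h2 | h2
      · interval_cases k
        · simp
        · omega
      · rw [X_pow_dvd_iff.mp (pow_sub_pow g h hg hh n hd h2) m hm, mul_zero]
  rw [Finset.sum_congr rfl hterm]
  rcases Nat.eq_zero_or_pos m with rfl | hm0
  · have h0g : PowerSeries.coeff (R := S) 0 g = 0 := by
      simpa [PowerSeries.coeff_zero_eq_constantCoeff] using PowerSeries.X_dvd_iff.mp hg
    have h0h : PowerSeries.coeff (R := S) 0 h = 0 := by
      simpa [PowerSeries.coeff_zero_eq_constantCoeff] using PowerSeries.X_dvd_iff.mp hh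
    simp [h0g, h0h]
  · rw [Finset.sum_ite_eq' (Finset.range (m + 1)) 1
      (fun _ => PowerSeries.coeff (R := S) m g - PowerSeries.coeff (R := S) m h),
      if_pos (by simp [Finset.mem_range]; omega)]
    simp

lemma comp_sub_one (F : PowerSeries S) (hF0 : PowerSeries.constantCoeff (R := S) F = 1)
    (i : ℕ) (g : PowerSeries S) (hg : X ^ i ∣ g) :
    (X : PowerSeries S) ^ i ∣ psComp g F - 1 := by
  rw [X_pow_dvd_iff]
  intro m hm
  rw [map_sub, coeff_psComp]
  have hterm : ∀ k ∈ Finset.range (m + 1),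
      PowerSeries.coeff (R := S) k F * PowerSeries.coeff (R := S) m (g ^ k)
      = if k = 0 then PowerSeries.coeff (R := S) m (1 : PowerSeries S) else 0 := by
    intro k _
    rcases eq_or_ne k 0 with rfl | hk
    · simp [PowerSeries.coeff_zero_eq_constantCoeff, hF0]
    · rw [if_neg hk,
        X_pow_dvd_iff.mp (hg.trans (dvd_pow_self g hk)) m hm, mul_zero]
  rw [Finset.sum_congr rfl hterm,
    Finset.sum_ite_eq' (Finset.range (m + 1)) 0
      (fun _ => PowerSeries.coeff (R := S) m (1 : PowerSeries S)),
    if_pos (by simp)]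
  simp

lemma comp_injOn (F : PowerSeries S) (hF1 : PowerSeries.coeff (R := S) 1 F = 1)
    (i : ℕ) (hi : 1 ≤ i) (g h : PowerSeries S) (hg : X ^ i ∣ g) (hh : X ^ i ∣ h)
    (heq : psComp g F = psComp h F) : g = h := by
  have hXg : (X : PowerSeries S) ∣ g := (dvd_pow_self X (by omega : i ≠ 0)).trans hg
  have hXh : (X : PowerSeries S) ∣ h := (dvd_pow_self X (by omega : i ≠ 0)).trans hh
  have key : ∀ n, (X : PowerSeries S) ^ n ∣ g - h := by
    intro n
    induction n with
    | zero => simp only [pow_zero]; exact one_dvd _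
    | succ n ih =>
      have h1 := comp_sub_comp F hF1 g h hXg hXh n ih
      rw [heq, sub_self, zero_sub, dvd_neg] at h1
      exact h1
  rw [← sub_eq_zero]
  ext n
  have := X_pow_dvd_iff.mp (key (n + 1)) n n.lt_succ_self
  simpa using this

/-- Newton-type approximation sequence for inverting `g ↦ psComp g F`. -/
noncomputable def seq (f F : PowerSeries S) : ℕ → PowerSeries S
  | 0 => f - 1
  | n + 1 => seq f F n - (psComp (seq f F n) F - f)

lemma seq_spec (F : PowerSeries S) (hF0 : PowerSeries.constantCoeff (R := S) F = 1)
    (hF1 : PowerSeries.coeff (R := S) 1 F = 1) (i : ℕ) (hi : 1 ≤ i)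
    (f : PowerSeries S) (hf : X ^ i ∣ f - 1) :
    ∀ n, (X : PowerSeries S) ^ i ∣ seq f F n
      ∧ (X : PowerSeries S) ^ (n + 1) ∣ psComp (seq f F n) F - f := by
  intro n
  induction n with
  | zero =>
    refine ⟨hf, ?_⟩
    show (X : PowerSeries S) ^ (0 + 1) ∣ psComp (f - 1) F - f
    have h1 : psComp (f - 1) F - f = (psComp (f - 1) F - 1) - (f - 1) := by ring
    rw [h1]
    exact (pow_dvd_pow X hi).trans (dvd_sub (comp_sub_one F hF0 i (f - 1) hf) hf)
  | succ n ih =>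
    obtain ⟨h1, h2⟩ := ih
    have hXs : (X : PowerSeries S) ∣ seq f F n := (dvd_pow_self X (by omega : i ≠ 0)).trans h1
    have hstep : (X : PowerSeries S) ^ i ∣ psComp (seq f F n) F - f := by
      have : psComp (seq f F n) F - f = (psComp (seq f F n) F - 1) - (f - 1) := by ring
      rw [this]
      exact dvd_sub (comp_sub_one F hF0 i _ h1) hf
    have hi1 : (X : PowerSeries S) ^ i ∣ seq f F (n + 1) := by
      show (X : PowerSeries S) ^ i ∣ seq f F n - (psComp (seq f F n) F - f)
      exact dvd_sub h1 hstep
    refine ⟨hi1, ?_⟩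
    have hXs' : (X : PowerSeries S) ∣ seq f F (n + 1) :=
      (dvd_pow_self X (by omega : i ≠ 0)).trans hi1
    have hd : (X : PowerSeries S) ^ (n + 1) ∣ seq f F (n + 1) - seq f F n := by
      have : seq f F (n + 1) - seq f F n = -(psComp (seq f F n) F - f) := by
        show seq f F n - (psComp (seq f F n) F - f) - seq f F n = _
        ring
      rw [this]
      exact dvd_neg.mpr h2
    have h3 := comp_sub_comp F hF1 (seq f F (n + 1)) (seq f F n) hXs' hXs (n + 1) hd
    have heq : psComp (seq f F (n + 1)) F - f
        = (psComp (seq f F (n + 1)) F - psComp (seq f F n) F)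
          - (seq f F (n + 1) - seq f F n) := by
      have hrw : seq f F (n + 1) = seq f F n - (psComp (seq f F n) F - f) := rfl
      rw [hrw]
      ring_nf
    rw [heq]
    exact h3

lemma comp_surjOn (F : PowerSeries S) (hF0 : PowerSeries.constantCoeff (R := S) F = 1)
    (hF1 : PowerSeries.coeff (R := S) 1 F = 1) (i : ℕ) (hi : 1 ≤ i)
    (f : PowerSeries S) (hf : X ^ i ∣ f - 1) :
    ∃ g : PowerSeries S, X ^ i ∣ g ∧ psComp g F = f := by
  have hspec := seq_spec F hF0 hF1 i hi f hf
  set g : PowerSeries S := PowerSeries.mk (fun n => PowerSeries.coeff (R := S) n (seq f F n)) with hgdef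
  have hstable : ∀ j m, j ≤ m → PowerSeries.coeff (R := S) j (seq f F m) = PowerSeries.coeff (R := S) j (seq f F j) := by
    intro j m hjm
    induction m with
    | zero => interval_cases j; rfl
    | succ m ih =>
      rcases Nat.lt_or_ge j (m + 1) with hj | hj
      · have hd : (X : PowerSeries S) ^ (m + 1) ∣ seq f F (m + 1) - seq f F m := by
          have : seq f F (m + 1) - seq f F m = -(psComp (seq f F m) F - f) := by
            show seq f F m - (psComp (seq f F m) F - f) - seq f F m = _
            ring
          rw [this]
          exact dvd_neg.mpr (hspec m).2
        have := X_pow_dvd_iff.mp hd j hj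
        rw [map_sub, sub_eq_zero] at this
        rw [this, ih (by omega)]
      · have : j = m + 1 := by omega
        subst this; rfl
  have hdiff : ∀ m, (X : PowerSeries S) ^ (m + 1) ∣ g - seq f F m := by
    intro m
    rw [X_pow_dvd_iff]
    intro j hj
    rw [map_sub, hgdef, PowerSeries.coeff_mk, hstable j m (by omega), sub_self]
  have hXig : (X : PowerSeries S) ^ i ∣ g := by
    rw [X_pow_dvd_iff]
    intro m hm
    rw [hgdef, PowerSeries.coeff_mk]
    exact X_pow_dvd_iff.mp (hspec m).1 m hm
  have hXg : (X : PowerSeries S) ∣ g := (dvd_pow_self X (by omega : i ≠ 0)).trans hXig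
  refine ⟨g, hXig, ?_⟩
  have key : ∀ m : ℕ, (X : PowerSeries S) ^ (m + 1) ∣ psComp g F - f := by
    intro m
    have hXsm : (X : PowerSeries S) ∣ seq f F m :=
      (dvd_pow_self X (by omega : i ≠ 0)).trans (hspec m).1
    have h1 := comp_sub_comp F hF1 g (seq f F m) hXg hXsm (m + 1) (hdiff m)
    have h2 := hdiff m
    have h3 := (hspec m).2
    have heq : psComp g F - f
        = ((psComp g F - psComp (seq f F m) F) - (g - seq f F m))
          + (g - seq f F m) + (psComp (seq f F m) F - f) := by ring
    rw [heq]
    exact dvd_add (dvd_add ((pow_dvd_pow X (by omega)).trans h1) h2) h3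
  rw [← sub_eq_zero]
  ext n
  have := X_pow_dvd_iff.mp (key n) n n.lt_succ_self
  simpa using this

end AHaux

/-- for every integer `i ≥ 1` and every commutative `ℤ_(p)`-algebra `S`,
substitution into the Artin–Hasse exponential `E` (regarded as an element of `S[[T]]`,
via its model `EZ` over `ℤ_(p)`) is a bijection from `T^i·S[[T]]` onto `1 + T^i·S[[T]]`. -/
theorem statement0 (p : ℕ) [Fact p.Prime] (i : ℕ) (hi : 1 ≤ i)
    (S : Type*) [CommRing S] [Algebra (ZLocP p) S]
    (EZ : PowerSeries (ZLocP p))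
    (hEZ : PowerSeries.map (ZLocPtoRat p) EZ = artinHasse p) :
    Set.BijOn (fun r => psComp r (PowerSeries.map (algebraMap (ZLocP p) S) EZ))
      {r : PowerSeries S | X ^ i ∣ r}
      {f : PowerSeries S | X ^ i ∣ f - 1} := by
  set F := PowerSeries.map (algebraMap (ZLocP p) S) EZ with hFdef
  have hAH0 : PowerSeries.coeff (R := ℚ) 0 (artinHasse p) = 1 := by
    rw [artinHasse, AHaux.coeff_psComp, Finset.sum_range_one, pow_zero]
    simp [PowerSeries.coeff_exp]
  have hAH1 : PowerSeries.coeff (R := ℚ) 1 (artinHasse p) = 1 := by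
    rw [artinHasse, AHaux.coeff_psComp, Finset.sum_range_succ, Finset.sum_range_one,
      pow_zero, pow_one]
    have hl : PowerSeries.coeff (R := ℚ) 1 (lseries p) = 1 := by
      rw [lseries, PowerSeries.coeff_mk, if_pos ⟨0, (pow_zero p).symm⟩]
      norm_num
    simp [PowerSeries.coeff_exp, hl]
  have hinj : Function.Injective (ZLocPtoRat p) := by
    rw [ZLocPtoRat, IsLocalization.lift_injective_iff]
    intro x y
    constructor
    · intro h
      have hx := IsLocalization.injective (ZLocP p)
        (Ideal.primeCompl_le_nonZeroDivisors (pIdeal p)) h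
      rw [hx]
    · intro h
      have hxy : x = y := Int.cast_injective (α := ℚ) (by simpa using h)
      rw [hxy]
  have hEZ0 : PowerSeries.coeff 0 EZ = 1 := by
    apply hinj
    have h := congrArg (PowerSeries.coeff (R := ℚ) 0) hEZ
    rw [PowerSeries.coeff_map] at h
    rw [h, hAH0, map_one]
  have hEZ1 : PowerSeries.coeff 1 EZ = 1 := by
    apply hinj
    have h := congrArg (PowerSeries.coeff (R := ℚ) 1) hEZ
    rw [PowerSeries.coeff_map] at h
    rw [h, hAH1, map_one]
  have hF0 : PowerSeries.constantCoeff (R := S) F = 1 := by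
    rw [← PowerSeries.coeff_zero_eq_constantCoeff_apply, hFdef, PowerSeries.coeff_map,
      hEZ0, map_one]
  have hF1 : PowerSeries.coeff (R := S) 1 F = 1 := by
    rw [hFdef, PowerSeries.coeff_map, hEZ1, map_one]
  refine ⟨fun r hr => ?_, fun g hg h hh heq => ?_, fun f hf => ?_⟩
  · exact AHaux.comp_sub_one F hF0 i r hr
  · exact AHaux.comp_injOn F hF1 i hi g h hg hh heq
  · obtain ⟨g, h1, h2⟩ := AHaux.comp_surjOn F hF0 hF1 i hi f hf
    exact ⟨g, h1, h2⟩


end
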